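/- There exists a finite connected simple graph G with mob(G) = a and mobmv(G) = b if and only if a = b = 1 or 2 ≤ a ≤ b. -/

import Mathlib

open SimpleGraph

variable {V : Type*} {W : Type*}

/-- `S` is a general position set of `G`: no shortest path of `G` contains more than two
vertices of `S`. -/
def IsGenPosSet (G : SimpleGraph V) (S : Set V) : Prop :=
  ∀ ⦃u v : V⦄ (p : G.Walk u v), p.IsPath → p.length = G.dist u v →
    (S ∩ {x | x ∈ p.support}).ncard ≤ 2

/-- `S` is a mutual visibility set of `G`: any two vertices of `S` are joined by a shortest
path containing no further vertex of `S`. -/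
def IsMutVisSet (G : SimpleGraph V) (S : Set V) : Prop :=
  ∀ ⦃u⦄, u ∈ S → ∀ ⦃v⦄, v ∈ S → ∃ p : G.Walk u v,
    p.IsPath ∧ p.length = G.dist u v ∧ ∀ x ∈ p.support, x ∈ S → x = u ∨ x = v

/-- A legal move (with respect to the position property `P`) of a configuration of `t` robots
on distinct vertices: one robot moves to an adjacent unoccupied vertex, and the resulting set
of occupied vertices again satisfies `P`. -/
def LegalMove (G : SimpleGraph V) (P : Set V → Prop) {t : ℕ} (f g : Fin t ↪ V) : Prop :=
  ∃ i : Fin t, G.Adj (f i) (g i) ∧ g i ∉ Set.range ⇑f ∧ (∀ j, j ≠ i → g j = f j) ∧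
    P (Set.range ⇑g)

/-- A configuration is a mobile `P`-configuration if it satisfies `P` and there is a sequence
of legal moves starting from it such that every vertex is visited by some robot. -/
def IsMobileConfig (G : SimpleGraph V) (P : Set V → Prop) {t : ℕ} (f : Fin t ↪ V) : Prop :=
  P (Set.range ⇑f) ∧ ∃ (N : ℕ) (c : ℕ → (Fin t ↪ V)), c 0 = f ∧
    (∀ k < N, LegalMove G P (c k) (c (k + 1))) ∧ ∀ v : V, ∃ k ≤ N, ∃ i, c k i = v

/-- A configuration is completely mobile if it is mobile and moreover every robot can visit
every vertex via a sequence of legal moves. -/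
def IsCompletelyMobileConfig (G : SimpleGraph V) (P : Set V → Prop) {t : ℕ}
    (f : Fin t ↪ V) : Prop :=
  IsMobileConfig G P f ∧ ∀ (v : V) (i : Fin t), ∃ (N : ℕ) (c : ℕ → (Fin t ↪ V)), c 0 = f ∧
    (∀ k < N, LegalMove G P (c k) (c (k + 1))) ∧ ∃ k ≤ N, c k i = v

/-- The mobile general position number `mob(G)`. -/
noncomputable def mobGP (G : SimpleGraph V) : ℕ :=
  sSup {t : ℕ | ∃ f : Fin t ↪ V, IsMobileConfig G (IsGenPosSet G) f}

/-- The completely mobile general position number `mob*(G)`. -/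
noncomputable def cmobGP (G : SimpleGraph V) : ℕ :=
  sSup {t : ℕ | ∃ f : Fin t ↪ V, IsCompletelyMobileConfig G (IsGenPosSet G) f}

/-- The mobile mutual visibility number `mobmv(G)`. -/
noncomputable def mobMV (G : SimpleGraph V) : ℕ :=
  sSup {t : ℕ | ∃ f : Fin t ↪ V, IsMobileConfig G (IsMutVisSet G) f}

/-- The completely mobile mutual visibility number `mobmv*(G)`. -/
noncomputable def cmobMV (G : SimpleGraph V) : ℕ :=
  sSup {t : ℕ | ∃ f : Fin t ↪ V, IsCompletelyMobileConfig G (IsMutVisSet G) f}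

/-- The mutual visibility number `μ(G)`. -/
noncomputable def muMV (G : SimpleGraph V) : ℕ :=
  sSup {n : ℕ | ∃ S : Set V, IsMutVisSet G S ∧ S.ncard = n}

/-- `μ₂(G)`: the largest cardinality of a mutual visibility set whose vertices are pairwise at
distance at most `2`. -/
noncomputable def muMV2 (G : SimpleGraph V) : ℕ :=
  sSup {n : ℕ | ∃ S : Set V, IsMutVisSet G S ∧ (∀ u ∈ S, ∀ v ∈ S, G.dist u v ≤ 2) ∧
    S.ncard = n}

/-- The join `G ∨ H` of two graphs: the disjoint union together with all edges between the
two vertex sets. -/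
def graphJoin (G : SimpleGraph V) (H : SimpleGraph W) : SimpleGraph (V ⊕ W) where
  Adj x y := match x, y with
    | Sum.inl a, Sum.inl b => G.Adj a b
    | Sum.inr a, Sum.inr b => H.Adj a b
    | Sum.inl _, Sum.inr _ => True
    | Sum.inr _, Sum.inl _ => True
  symm := by constructor; rintro (a | a) (b | b) h <;> simp_all <;> exact h.symm
  loopless := by constructor; rintro (a | a) h <;> simp_all

/-- The strong product `G ⊠ H` of two graphs. -/
def strongProd (G : SimpleGraph V) (H : SimpleGraph W) : SimpleGraph (V × W) where
  Adj x y := (x.1 = y.1 ∧ H.Adj x.2 y.2) ∨ (x.2 = y.2 ∧ G.Adj x.1 y.1) ∨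
    (G.Adj x.1 y.1 ∧ H.Adj x.2 y.2)
  symm := by
    constructor
    rintro ⟨a, b⟩ ⟨c, d⟩ (⟨h1, h2⟩ | ⟨h1, h2⟩ | ⟨h1, h2⟩)
    · exact Or.inl ⟨h1.symm, h2.symm⟩
    · exact Or.inr (Or.inl ⟨h1.symm, h2.symm⟩)
    · exact Or.inr (Or.inr ⟨h1.symm, h2.symm⟩)
  loopless := by constructor; rintro ⟨a, b⟩ (⟨_, h⟩ | ⟨_, h⟩ | ⟨h, _⟩) <;> simp_all

/-- A vertex `u` is a hub if any two distinct non-adjacent vertices different from `u` are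
both adjacent to `u`. -/
def IsHub (G : SimpleGraph V) (u : V) : Prop :=
  ∀ ⦃w₁ w₂ : V⦄, w₁ ≠ u → w₂ ≠ u → w₁ ≠ w₂ → ¬G.Adj w₁ w₂ → G.Adj w₁ u ∧ G.Adj w₂ u

/-- A block graph: every block is complete; equivalently, the vertices of any cycle form a
clique. -/
def IsBlockGraph (G : SimpleGraph V) : Prop :=
  ∀ (v : V) (c : G.Walk v v), c.IsCycle → G.IsClique {x | x ∈ c.support}

/-- The graph obtained from the complete graph `K n` (on vertices `1, ..., n`) by attaching
one pendant vertex `0`, adjacent only to vertex `1`. -/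
def cliqueWithLeaf (n : ℕ) : SimpleGraph (Fin (n + 1)) :=
  SimpleGraph.fromRel (fun i j => (i ≠ 0 ∧ j ≠ 0) ∨ (i = 0 ∧ j = 1))

/-- `G` is (isomorphic to) a path graph. -/
def IsPathGraph (G : SimpleGraph V) : Prop :=
  ∃ n : ℕ, Nonempty (G ≃g pathGraph n)
section AuxGeneral

open Sum Function

variable {V : Type*} [Fintype V] [DecidableEq V] {G : SimpleGraph V} {P : Set V → Prop} {t : ℕ}

lemma aux_ncard_support_le {S : Set V} {u v : V} (p : G.Walk u v) :
    (S ∩ {x | x ∈ p.support}).ncard ≤ p.length + 1 := by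
  calc (S ∩ {x | x ∈ p.support}).ncard ≤ ({x | x ∈ p.support} : Set V).ncard :=
        Set.ncard_le_ncard Set.inter_subset_right (Set.toFinite _)
    _ = p.support.toFinset.card := by rw [← List.coe_toFinset, Set.ncard_coe_finset]
    _ ≤ p.support.length := p.support.toFinset_card_le
    _ = p.length + 1 := p.length_support

lemma aux_gp_of_ncard_le_two {S : Set V} (h : S.ncard ≤ 2) : IsGenPosSet G S :=
  fun _ _ p _ _ => le_trans (Set.ncard_le_ncard Set.inter_subset_left (Set.toFinite _)) h

lemma aux_gp_to_mv {S : Set V} (hG : G.Connected) (h : IsGenPosSet G S) : IsMutVisSet G S := by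
  intro u hu v hv
  by_cases huv : u = v
  · subst huv
    exact ⟨SimpleGraph.Walk.nil, SimpleGraph.Walk.IsPath.nil, by simp [SimpleGraph.dist_self],
      by simp⟩
  · obtain ⟨p, hp, hl⟩ := hG.exists_path_of_dist u v
    refine ⟨p, hp, hl, fun x hx hxS => ?_⟩
    by_contra hne
    push_neg at hne
    have hsub : ({u, v, x} : Set V) ⊆ S ∩ {y | y ∈ p.support} := by
      rintro z (rfl | rfl | rfl)
      · exact ⟨hu, p.start_mem_support⟩
      · exact ⟨hv, p.end_mem_support⟩
      · exact ⟨hxS, hx⟩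
    have h3 : ({u, v, x} : Set V).ncard = 3 := by
      rw [Set.ncard_insert_of_notMem (by simp [huv, Ne.symm hne.1]),
        Set.ncard_insert_of_notMem (by simp [Ne.symm hne.2]), Set.ncard_singleton]
    have hle := h p hp hl
    have := h3 ▸ Set.ncard_le_ncard hsub (Set.toFinite _)
    omega

end AuxGeneral
section AuxRCov

open Sum Function

variable {V : Type*} [Fintype V] [DecidableEq V] {G : SimpleGraph V} {P : Set V → Prop} {t : ℕ}

/-- Auxiliary: there is a legal sequence from `f` to `g` visiting all of `A`. -/
def RCov (G : SimpleGraph V) (P : Set V → Prop) {t : ℕ} (f g : Fin t ↪ V) (A : Set V) : Prop :=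
  ∃ (N : ℕ) (c : ℕ → (Fin t ↪ V)), c 0 = f ∧ c N = g ∧
    (∀ k < N, LegalMove G P (c k) (c (k + 1))) ∧ ∀ v ∈ A, ∃ k ≤ N, ∃ i, c k i = v

lemma RCov.refl (f : Fin t ↪ V) : RCov G P f f (Set.range ⇑f) :=
  ⟨0, fun _ => f, rfl, rfl, fun k hk => absurd hk (Nat.not_lt_zero k),
    fun v hv => ⟨0, le_rfl, hv⟩⟩

lemma RCov.mono {f g : Fin t ↪ V} {A B : Set V} (h : RCov G P f g A) (hBA : B ⊆ A) :
    RCov G P f g B := by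
  obtain ⟨N, c, h0, hN, hleg, hcov⟩ := h
  exact ⟨N, c, h0, hN, hleg, fun v hv => hcov v (hBA hv)⟩

lemma RCov.trans {f g h : Fin t ↪ V} {A B : Set V} (h1 : RCov G P f g A)
    (h2 : RCov G P g h B) : RCov G P f h (A ∪ B) := by
  obtain ⟨N₁, c₁, hc0, hcN, hleg₁, hcov₁⟩ := h1
  obtain ⟨N₂, c₂, hd0, hdN, hleg₂, hcov₂⟩ := h2
  set c : ℕ → (Fin t ↪ V) := fun k => if k < N₁ then c₁ k else c₂ (k - N₁) with hc
  have hval : ∀ k ≤ N₁, c k = c₁ k := by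
    intro k hk
    rcases lt_or_eq_of_le hk with hlt | rfl
    · simp [hc, hlt]
    · simp [hc, hcN, hd0.symm]
  have hval2 : ∀ k, c (N₁ + k) = c₂ k := by
    intro k
    have : ¬ (N₁ + k < N₁) := by omega
    simp [hc, this]
  refine ⟨N₁ + N₂, c, by rw [hval 0 (by omega)]; exact hc0, by rw [hval2]; exact hdN, ?_, ?_⟩
  · intro k hk
    rcases lt_or_ge k N₁ with hlt | hge
    · rw [hval k (by omega), hval (k+1) (by omega)]
      exact hleg₁ k hlt
    · obtain ⟨k', rfl⟩ : ∃ k', k = N₁ + k' := ⟨k - N₁, by omega⟩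
      rw [hval2 k', show N₁ + k' + 1 = N₁ + (k' + 1) by omega, hval2 (k' + 1)]
      exact hleg₂ k' (by omega)
  · intro v hv
    rcases hv with hv | hv
    · obtain ⟨k, hk, i, hi⟩ := hcov₁ v hv
      exact ⟨k, by omega, i, by rw [hval k hk]; exact hi⟩
    · obtain ⟨k, hk, i, hi⟩ := hcov₂ v hv
      exact ⟨N₁ + k, by omega, i, by rw [hval2 k]; exact hi⟩

lemma RCov.step {f g : Fin t ↪ V} (h : LegalMove G P f g) : RCov G P f g (Set.range ⇑f) := by
  refine ⟨1, fun k => if k = 0 then f else g, by simp, by simp, ?_, ?_⟩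
  · intro k hk
    have : k = 0 := by omega
    subst this
    simpa using h
  · intro v hv
    exact ⟨0, by omega, by simpa using hv⟩

/-- Update one robot of a configuration. -/
def updEmb (f : Fin t ↪ V) (i₀ : Fin t) (x : V) (hx : x ∉ Set.range ⇑f) : Fin t ↪ V :=
  ⟨Function.update ⇑f i₀ x, by
    intro i j hij
    by_cases hi : i = i₀ <;> by_cases hj : j = i₀
    · rw [hi, hj]
    · subst hi
      rw [Function.update_self, Function.update_of_ne hj] at hij
      exact absurd ⟨j, hij.symm⟩ hx
    · subst hj
      rw [Function.update_of_ne hi, Function.update_self] at hij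
      exact absurd ⟨i, hij⟩ hx
    · rw [Function.update_of_ne hi, Function.update_of_ne hj] at hij
      exact f.injective hij⟩

@[simp] lemma updEmb_same {f : Fin t ↪ V} {i₀ : Fin t} {x : V} {hx : x ∉ Set.range ⇑f} :
    updEmb f i₀ x hx i₀ = x := Function.update_self _ _ _

lemma updEmb_noteq {f : Fin t ↪ V} {i₀ i : Fin t} {x : V} {hx : x ∉ Set.range ⇑f}
    (h : i ≠ i₀) : updEmb f i₀ x hx i = f i := Function.update_of_ne h _ _

lemma legal_updEmb {f : Fin t ↪ V} {i₀ : Fin t} {x : V} {hx : x ∉ Set.range ⇑f}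
    (hadj : G.Adj (f i₀) x) (hP' : P (Set.range ⇑(updEmb f i₀ x hx))) :
    LegalMove G P f (updEmb f i₀ x hx) :=
  ⟨i₀, by simpa using hadj, by simpa using hx, fun j hj => updEmb_noteq hj, hP'⟩

lemma aux_route (hG : G.Connected) (hP : ∀ h : Fin t ↪ V, P (Set.range ⇑h)) :
    ∀ (n : ℕ) (f : Fin t ↪ V) (v : V), (∃ i, G.dist (f i) v ≤ n) →
      ∃ g, RCov G P f g {v} := by
  intro n
  induction n with
  | zero =>
    rintro f v ⟨i, hi⟩
    have : f i = v := hG.dist_eq_zero_iff.mp (Nat.le_zero.mp hi)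
    exact ⟨f, (RCov.refl f).mono (by rintro z rfl; exact ⟨i, this⟩)⟩
  | succ n ih =>
    rintro f v ⟨i, hi⟩
    by_cases hv : ∃ j, f j = v
    · obtain ⟨j, hj⟩ := hv
      exact ⟨f, (RCov.refl f).mono (by rintro z rfl; exact ⟨j, hj⟩)⟩
    · have hne : f i ≠ v := fun h => hv ⟨i, h⟩
      have hd0 : G.dist (f i) v ≠ 0 := by
        exact fun h => hne (hG.dist_eq_zero_iff.mp h)
      obtain ⟨p, hp⟩ := SimpleGraph.exists_walk_of_dist_ne_zero hd0
      cases p with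
      | nil => exact absurd hp.symm hd0
      | @cons _ w _ hadj q =>
        have hq : G.dist w v ≤ n := by
          have h1 := SimpleGraph.dist_le q
          have h2 : q.length + 1 = G.dist (f i) v := by simpa using hp
          omega
        by_cases hw : w ∈ Set.range ⇑f
        · obtain ⟨j, hj⟩ := hw
          exact ih f v ⟨j, by rw [hj]; exact hq⟩
        · have hlegal : LegalMove G P f (updEmb f i w hw) :=
            legal_updEmb hadj (hP _)
          obtain ⟨g', hg'⟩ := ih (updEmb f i w hw) v ⟨i, by simpa using hq⟩
          exact ⟨g', ((RCov.step hlegal).trans hg').mono Set.subset_union_right⟩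

lemma aux_cover (hG : G.Connected) (hP : ∀ h : Fin t ↪ V, P (Set.range ⇑h)) (ht : 0 < t)
    (f : Fin t ↪ V) : ∃ g, RCov G P f g Set.univ := by
  suffices h : ∀ s : Finset V, ∃ g, RCov G P f g ↑s by
    obtain ⟨g, hg⟩ := h Finset.univ
    exact ⟨g, by simpa using hg⟩
  intro s
  induction s using Finset.induction_on with
  | empty => exact ⟨f, (RCov.refl f).mono (by simp)⟩
  | @insert v s hv ih =>
    obtain ⟨g, hg⟩ := ih
    obtain ⟨g', hg'⟩ := aux_route hG hP (G.dist (g ⟨0, ht⟩) v) g v ⟨⟨0, ht⟩, le_rfl⟩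
    refine ⟨g', (hg.trans hg').mono ?_⟩
    intro z hz
    simp only [Finset.coe_insert, Set.mem_insert_iff, Finset.mem_coe] at hz
    rcases hz with rfl | hz
    · exact Or.inr rfl
    · exact Or.inl hz

lemma aux_mobile_of_RCov {f g : Fin t ↪ V} (hP0 : P (Set.range ⇑f))
    (h : RCov G P f g Set.univ) : IsMobileConfig G P f := by
  obtain ⟨N, c, h0, _, hleg, hcov⟩ := h
  exact ⟨hP0, N, c, h0, hleg, fun v => hcov v (Set.mem_univ v)⟩

lemma aux_mobile (hG : G.Connected) (hP : ∀ h : Fin t ↪ V, P (Set.range ⇑h)) (ht : 0 < t)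
    (f : Fin t ↪ V) : IsMobileConfig G P f := by
  obtain ⟨g, hg⟩ := aux_cover hG hP ht f
  exact aux_mobile_of_RCov (hP f) hg

lemma RCov.fold {ι : Type*} [DecidableEq ι] (s : Finset ι) (A : ι → Set V) {f : Fin t ↪ V}
    (h : ∀ x ∈ s, RCov G P f f (A x)) :
    RCov G P f f ((Set.range ⇑f) ∪ ⋃ x ∈ s, A x) := by
  induction s using Finset.induction_on with
  | empty => exact (RCov.refl f).mono (by simp)
  | @insert v s hv ih =>
    have h1 := ih (fun x hx => h x (Finset.mem_insert_of_mem hx))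
    have h2 := h v (Finset.mem_insert_self v s)
    refine (h1.trans h2).mono ?_
    intro z hz
    rcases hz with hz | hz
    · exact Or.inl (Or.inl hz)
    · simp only [Set.mem_iUnion] at hz
      obtain ⟨x, hx, hzx⟩ := hz
      rcases Finset.mem_insert.mp hx with rfl | hx
      · exact Or.inr hzx
      · exact Or.inl (Or.inr (by simp only [Set.mem_iUnion]; exact ⟨x, hx, hzx⟩))

end AuxRCov
section AuxTop

open Sum Function SimpleGraph

variable {V : Type*} [Fintype V] [DecidableEq V] {G : SimpleGraph V} {P : Set V → Prop} {t : ℕ}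

lemma aux_sSup_eq {S : Set ℕ} {n : ℕ} (h1 : n ∈ S) (h2 : ∀ x ∈ S, x ≤ n) : sSup S = n :=
  le_antisymm (csSup_le ⟨n, h1⟩ h2) (le_csSup ⟨n, h2⟩ h1)

lemma aux_mem_le_card {tt : ℕ} (h : ∃ f : Fin tt ↪ V, IsMobileConfig G P f) :
    tt ≤ Fintype.card V := by
  obtain ⟨f, _⟩ := h
  simpa using Fintype.card_le_of_embedding f

lemma aux_hP1 (f : Fin 1 ↪ V) : IsGenPosSet G (Set.range ⇑f) := by
  apply aux_gp_of_ncard_le_two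
  have h : Set.range ⇑f = {f 0} := by
    ext x
    constructor
    · rintro ⟨i, rfl⟩
      rw [Subsingleton.elim i 0]
      rfl
    · rintro rfl
      exact ⟨0, rfl⟩
  rw [h, Set.ncard_singleton]
  omega

lemma aux_hP2 (f : Fin 2 ↪ V) : IsGenPosSet G (Set.range ⇑f) := by
  apply aux_gp_of_ncard_le_two
  have h : Set.range ⇑f ⊆ {f 0, f 1} := by
    rintro x ⟨i, rfl⟩
    fin_cases i
    · exact Or.inl rfl
    · exact Or.inr rfl
  calc (Set.range ⇑f).ncard ≤ ({f 0, f 1} : Set V).ncard :=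
        Set.ncard_le_ncard h (Set.toFinite _)
    _ ≤ 1 + 1 := le_trans (Set.ncard_insert_le _ _) (by simp)
    _ = 2 := rfl

lemma aux_mobile_gp_mv (hG : G.Connected) {f : Fin t ↪ V}
    (h : IsMobileConfig G (IsGenPosSet G) f) : IsMobileConfig G (IsMutVisSet G) f := by
  obtain ⟨h1, N, c, h0, hleg, hcov⟩ := h
  refine ⟨aux_gp_to_mv hG h1, N, c, h0, fun k hk => ?_, hcov⟩
  obtain ⟨i, ha1, ha2, ha3, ha4⟩ := hleg k hk
  exact ⟨i, ha1, ha2, ha3, aux_gp_to_mv hG ha4⟩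

lemma aux_mobile_full {W : Type*} {G : SimpleGraph W} {P : Set W → Prop} {t : ℕ}
    (f : Fin t ↪ W) (hsurj : Function.Surjective ⇑f) (hP : P (Set.range ⇑f)) :
    IsMobileConfig G P f :=
  ⟨hP, 0, fun _ => f, rfl, fun k hk => absurd hk (Nat.not_lt_zero k),
    fun v => ⟨0, le_rfl, hsurj v⟩⟩

lemma aux_top_connected (n : ℕ) (hn : 0 < n) : (⊤ : SimpleGraph (Fin n)).Connected := by
  rw [connected_iff]
  refine ⟨fun u v => ?_, ⟨⟨0, hn⟩⟩⟩
  rcases eq_or_ne u v with rfl | h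
  · exact Reachable.refl u
  · exact SimpleGraph.Adj.reachable (by simpa using h)

lemma aux_gp_univ_top {n : ℕ} : IsGenPosSet (⊤ : SimpleGraph (Fin n)) Set.univ := by
  intro u v p hp hl
  have h1 : p.length ≤ 1 := by
    rcases eq_or_ne u v with rfl | h
    · rw [hl, SimpleGraph.dist_self]
      omega
    · rw [hl, SimpleGraph.dist_eq_one_iff_adj.mpr (by simpa using h)]
  exact le_trans (aux_ncard_support_le p) (by omega)

lemma aux_mv_univ_top {n : ℕ} : IsMutVisSet (⊤ : SimpleGraph (Fin n)) Set.univ := by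
  intro u _ v _
  rcases eq_or_ne u v with rfl | h
  · exact ⟨Walk.nil, Walk.IsPath.nil, by simp [SimpleGraph.dist_self], by simp⟩
  · refine ⟨Walk.cons (by simpa using h) Walk.nil, ?_, ?_, ?_⟩
    · simp [Walk.isPath_def, h]
    · simp [SimpleGraph.dist_eq_one_iff_adj.mpr (show (⊤ : SimpleGraph (Fin n)).Adj u v by simpa using h)]
    · intro x hx _
      simpa using hx

lemma aux_top_vals (n : ℕ) (hn : 0 < n) :
    mobGP (⊤ : SimpleGraph (Fin n)) = n ∧ mobMV (⊤ : SimpleGraph (Fin n)) = n := by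
  have hrefl : Set.range ⇑(Function.Embedding.refl (Fin n)) = Set.univ :=
    Set.range_eq_univ.mpr (fun v => ⟨v, rfl⟩)
  constructor
  · refine aux_sSup_eq ⟨Function.Embedding.refl _,
      aux_mobile_full _ (fun v => ⟨v, rfl⟩) (by rw [hrefl]; exact aux_gp_univ_top)⟩
      (fun x hx => by simpa using aux_mem_le_card hx)
  · refine aux_sSup_eq ⟨Function.Embedding.refl _,
      aux_mobile_full _ (fun v => ⟨v, rfl⟩) (by rw [hrefl]; exact aux_mv_univ_top)⟩
      (fun x hx => by simpa using aux_mem_le_card hx)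

end AuxTop
section AuxSplit

open Sum Function SimpleGraph

/-- The complete split graph: a clique on `Fin a` joined to an independent set `Fin m`. -/
abbrev auxJ (a m : ℕ) : SimpleGraph (Fin a ⊕ Fin m) :=
  graphJoin (⊤ : SimpleGraph (Fin a)) (⊥ : SimpleGraph (Fin m))

variable {a m : ℕ}

lemma auxJ_adj_ll {x y : Fin a} : (auxJ a m).Adj (inl x) (inl y) ↔ x ≠ y := by
  show (⊤ : SimpleGraph (Fin a)).Adj x y ↔ x ≠ y
  simp

lemma auxJ_adj_lr {x : Fin a} {j : Fin m} : (auxJ a m).Adj (inl x) (inr j) := trivial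

lemma auxJ_adj_rl {x : Fin a} {j : Fin m} : (auxJ a m).Adj (inr j) (inl x) := trivial

lemma auxJ_adj_rr {j j' : Fin m} : ¬ (auxJ a m).Adj (inr j) (inr j') := by
  show ¬ (⊥ : SimpleGraph (Fin m)).Adj j j'
  simp

lemma auxJ_connected (ha : 0 < a) : (auxJ a m).Connected := by
  rw [connected_iff]
  have key : ∀ w, (auxJ a m).Reachable w (inl ⟨0, ha⟩) := by
    intro w
    rcases eq_or_ne w (inl ⟨0, ha⟩) with rfl | h
    · exact Reachable.refl _
    · refine SimpleGraph.Adj.reachable ?_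
      rcases w with x | j
      · exact auxJ_adj_ll.mpr (fun e => h (by rw [e]))
      · exact auxJ_adj_rl
  exact ⟨fun u v => (key u).trans (key v).symm, ⟨inl ⟨0, ha⟩⟩⟩

lemma auxJ_dist_rr (ha : 0 < a) {j j' : Fin m} (h : j ≠ j') :
    (auxJ a m).dist (inr j) (inr j') = 2 := by
  have hle : (auxJ a m).dist (inr j) (inr j') ≤ 2 := by
    simpa using SimpleGraph.dist_le
      (Walk.cons (auxJ_adj_rl (x := ⟨0, ha⟩) (j := j)) (Walk.cons (auxJ_adj_lr (j := j')) Walk.nil))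
  have h0 : (auxJ a m).dist (inr j) (inr j') ≠ 0 := by
    intro h0
    exact h (by simpa using (auxJ_connected ha).dist_eq_zero_iff.mp h0)
  have h1 : (auxJ a m).dist (inr j) (inr j') ≠ 1 := by
    intro h1
    exact auxJ_adj_rr (SimpleGraph.dist_eq_one_iff_adj.mp h1)
  omega

lemma auxJ_both_inr {u v : Fin a ⊕ Fin m} (h : u ≠ v) (hadj : ¬ (auxJ a m).Adj u v) :
    ∃ j j', u = inr j ∧ v = inr j' ∧ j ≠ j' := by
  rcases u with x | j <;> rcases v with y | j'
  · exact absurd (auxJ_adj_ll.mpr (fun e => h (by rw [e]))) hadj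
  · exact absurd auxJ_adj_lr hadj
  · exact absurd auxJ_adj_rl hadj
  · exact ⟨j, j', rfl, rfl, fun e => h (by rw [e])⟩

lemma auxJ_dist_le_two (ha : 0 < a) (u v : Fin a ⊕ Fin m) : (auxJ a m).dist u v ≤ 2 := by
  rcases eq_or_ne u v with rfl | h
  · simp [SimpleGraph.dist_self]
  by_cases hadj : (auxJ a m).Adj u v
  · rw [SimpleGraph.dist_eq_one_iff_adj.mpr hadj]
    omega
  · obtain ⟨j, j', rfl, rfl, hjj⟩ := auxJ_both_inr h hadj
    rw [auxJ_dist_rr ha hjj]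

lemma auxJ_gpneg (ha : 0 < a) {S : Set (Fin a ⊕ Fin m)} {x : Fin a} {j j' : Fin m}
    (hx : inl x ∈ S) (hj : inr j ∈ S) (hj' : inr j' ∈ S) (hne : j ≠ j') :
    ¬ IsGenPosSet (auxJ a m) S := by
  intro hgp
  set p : (auxJ a m).Walk (inr j) (inr j') :=
    Walk.cons (auxJ_adj_rl (x := x)) (Walk.cons auxJ_adj_lr Walk.nil) with hpdef
  have hp : p.IsPath := by
    simp [hpdef, Walk.isPath_def, hne]
  have hlen : p.length = (auxJ a m).dist (inr j) (inr j') := by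
    simp [hpdef, auxJ_dist_rr ha hne]
  have h3 : ({inr j, inl x, inr j'} : Set (Fin a ⊕ Fin m)) ⊆ S ∩ {y | y ∈ p.support} := by
    rintro z (rfl | rfl | rfl)
    · exact ⟨hj, by simp [hpdef]⟩
    · exact ⟨hx, by simp [hpdef]⟩
    · exact ⟨hj', by simp [hpdef]⟩
  have hcard : ({inr j, inl x, inr j'} : Set (Fin a ⊕ Fin m)).ncard = 3 := by
    rw [Set.ncard_insert_of_notMem (by simp [hne]),
      Set.ncard_insert_of_notMem (by simp), Set.ncard_singleton]
  have hle := hgp p hp hlen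
  have := hcard ▸ Set.ncard_le_ncard h3 (Set.toFinite _)
  omega

lemma aux_ncard_pair_le {W : Type*} (x y : W) : ({x, y} : Set W).ncard ≤ 2 :=
  le_trans (Set.ncard_insert_le _ _) (by simp)

lemma aux_ncard_triple {W : Type*} (S : Set W) (u w v : W) (h : ¬ (u ∈ S ∧ v ∈ S)) :
    (S ∩ {x | x ∈ [u, w, v]}).ncard ≤ 2 := by
  by_cases huS : u ∈ S
  · have hvS : v ∉ S := fun hv => h ⟨huS, hv⟩
    refine le_trans (Set.ncard_le_ncard ?_ (Set.toFinite ({u, w} : Set W)))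
      (aux_ncard_pair_le u w)
    rintro z ⟨hzS, hzl⟩
    simp only [List.mem_cons, List.not_mem_nil, or_false] at hzl
    rcases hzl with rfl | rfl | rfl
    · exact Or.inl rfl
    · exact Or.inr rfl
    · exact absurd hzS hvS
  · refine le_trans (Set.ncard_le_ncard ?_ (Set.toFinite ({w, v} : Set W)))
      (aux_ncard_pair_le w v)
    rintro z ⟨hzS, hzl⟩
    simp only [List.mem_cons, List.not_mem_nil, or_false] at hzl
    rcases hzl with rfl | rfl | rfl
    · exact absurd hzS huS
    · exact Or.inl rfl
    · exact Or.inr rfl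

lemma auxJ_gpchar (ha : 0 < a) {S : Set (Fin a ⊕ Fin m)}
    (hS : ∀ j j' : Fin m, inr j ∈ S → inr j' ∈ S → j = j') : IsGenPosSet (auxJ a m) S := by
  intro u v p hp hl
  by_cases hlen : p.length ≤ 1
  · exact le_trans (aux_ncard_support_le p) (by omega)
  · have h2 : p.length = 2 := by
      have := auxJ_dist_le_two ha u v
      omega
    have hdist : (auxJ a m).dist u v = 2 := by omega
    have huv : u ≠ v := by
      rintro rfl
      rw [SimpleGraph.dist_self] at hdist
      omega
    have hnadj : ¬ (auxJ a m).Adj u v := by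
      intro hadj
      rw [SimpleGraph.dist_eq_one_iff_adj.mpr hadj] at hdist
      omega
    obtain ⟨j, j', rfl, rfl, hjj⟩ := auxJ_both_inr huv hnadj
    cases p with
    | nil => simp at h2
    | @cons _ w _ hadj q =>
      cases q with
      | nil => simp at h2
      | @cons _ w' _ hadj' q' =>
        cases q' with
        | cons hadj'' q'' => simp at h2
        | nil =>
          simp only [Walk.support_cons, Walk.support_nil]
          exact aux_ncard_triple S _ _ _ (fun hmem => hjj (hS _ _ hmem.1 hmem.2))

end AuxSplit
section AuxSplit2

open Sum Function SimpleGraph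

variable {a m : ℕ}

lemma auxJ_mvchar (ha : 0 < a) {S : Set (Fin a ⊕ Fin m)} {x₀ : Fin a} (hx₀ : inl x₀ ∉ S) :
    IsMutVisSet (auxJ a m) S := by
  intro u hu v hv
  rcases eq_or_ne u v with rfl | huv
  · exact ⟨Walk.nil, Walk.IsPath.nil, by simp [SimpleGraph.dist_self], by simp⟩
  by_cases hadj : (auxJ a m).Adj u v
  · refine ⟨Walk.cons hadj Walk.nil, ?_, ?_, ?_⟩
    · simp [Walk.isPath_def, huv]
    · simp [SimpleGraph.dist_eq_one_iff_adj.mpr hadj]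
    · intro x hx _
      simp only [Walk.support_cons, Walk.support_nil, List.mem_cons,
        List.not_mem_nil, or_false] at hx
      tauto
  · obtain ⟨j, j', rfl, rfl, hjj⟩ := auxJ_both_inr huv hadj
    refine ⟨Walk.cons (auxJ_adj_rl (x := x₀)) (Walk.cons auxJ_adj_lr Walk.nil), ?_, ?_, ?_⟩
    · simp [Walk.isPath_def, hjj]
    · simp [auxJ_dist_rr ha hjj]
    · intro x hx hxS
      simp only [Walk.support_cons, Walk.support_nil, List.mem_cons,
        List.not_mem_nil, or_false] at hx
      rcases hx with rfl | rfl | rfl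
      · exact Or.inl rfl
      · exact absurd hxS hx₀
      · exact Or.inr rfl

lemma auxJ_mvneg (ha : 0 < a) (hm : 2 ≤ m) : ¬ IsMutVisSet (auxJ a m) Set.univ := by
  intro h
  have hne : (⟨0, by omega⟩ : Fin m) ≠ ⟨1, by omega⟩ := by
    intro e
    have := Fin.mk.inj_iff.mp e
    omega
  obtain ⟨p, hp, hl, hcond⟩ :=
    h (Set.mem_univ (inr (⟨0, by omega⟩ : Fin m))) (Set.mem_univ (inr (⟨1, by omega⟩ : Fin m)))
  rw [auxJ_dist_rr ha hne] at hl
  cases p with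
  | @cons _ w _ hadj q =>
    cases q with
    | nil => simp at hl
    | @cons _ w' _ hadj' q' =>
      cases q' with
      | cons hadj'' q'' => simp at hl
      | nil =>
        have hw := hcond w (by simp) (Set.mem_univ w)
        rw [Walk.isPath_def] at hp
        simp only [Walk.support_cons, Walk.support_nil] at hp
        rcases hw with rfl | rfl
        · simp at hp
        · simp at hp

lemma auxP1 {t : ℕ} (f : Fin t ↪ Fin a ⊕ Fin m) (h : ∀ i, ∃ x, f i = inl x) : t ≤ a := by
  choose φ hφ using h
  have hinj : Function.Injective φ := fun i i' e => f.injective (by rw [hφ, hφ, e])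
  simpa using Fintype.card_le_of_injective φ hinj

lemma auxP2 {t : ℕ} (f : Fin t ↪ Fin a ⊕ Fin m) (x₀ : Fin a) (j : Fin m)
    (h : ∀ i, (∃ x, f i = inl x ∧ x ≠ x₀) ∨ f i = inr j) : t ≤ a := by
  have hinj : Function.Injective (fun i => Sum.elim id (fun _ => x₀) (f i)) := by
    intro i i' e
    simp only at e
    rcases h i with ⟨x, hx, hxne⟩ | hx <;> rcases h i' with ⟨y, hy, hyne⟩ | hy
    · rw [hx, hy] at e
      simp only [Sum.elim_inl, id_eq] at e
      exact f.injective (by rw [hx, hy, e])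
    · rw [hx, hy] at e
      simp only [Sum.elim_inl, Sum.elim_inr, id_eq] at e
      exact absurd e hxne
    · rw [hx, hy] at e
      simp only [Sum.elim_inl, Sum.elim_inr, id_eq] at e
      exact absurd e.symm hyne
    · exact f.injective (by rw [hx, hy])
  simpa using Fintype.card_le_of_injective _ hinj

lemma aux_two_ne {t : ℕ} (ht : 3 ≤ t) (i₀ : Fin t) :
    ∃ i i' : Fin t, i ≠ i' ∧ i ≠ i₀ ∧ i' ≠ i₀ := by
  have h2 : 1 < (Finset.univ.erase i₀).card := by
    rw [Finset.card_erase_of_mem (Finset.mem_univ _)]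
    simp only [Finset.card_univ, Fintype.card_fin]
    omega
  obtain ⟨i, hi, i', hi', hne⟩ := Finset.one_lt_card.mp h2
  exact ⟨i, i', hne, (Finset.mem_erase.mp hi).1, (Finset.mem_erase.mp hi').1⟩

lemma auxJ_frozen (ha : 2 ≤ a) {t : ℕ} (ht : a + 1 ≤ t)
    (f : Fin t ↪ Fin a ⊕ Fin m) (hgp : IsGenPosSet (auxJ a m) (Set.range ⇑f))
    (g : Fin t ↪ Fin a ⊕ Fin m) : ¬ LegalMove (auxJ a m) (IsGenPosSet (auxJ a m)) f g := by
  rintro ⟨i₀, hadj, hfree, hoth, hgp'⟩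
  have ha0 : 0 < a := by omega
  have hsome_inr : ∃ i j, f i = inr j := by
    by_contra hno
    push_neg at hno
    have hall : ∀ i, ∃ x, f i = inl x := by
      intro i
      rcases hfi : f i with x | k
      · exact ⟨x, rfl⟩
      · exact absurd hfi (hno i k)
    have := auxP1 f hall
    omega
  rcases hgi : g i₀ with x' | j'
  · -- the robot moves to a clique vertex `inl x'`
    rw [hgi] at hfree
    by_cases hL : ∃ iℓ y, f iℓ = inl y
    · obtain ⟨iℓ, y, hy⟩ := hL
      obtain ⟨i₁, j, hj⟩ := hsome_inr
      have huniq : ∀ i k, f i = inr k → k = j := by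
        intro i k hk
        by_contra hkj
        exact auxJ_gpneg ha0 (S := Set.range ⇑f) ⟨iℓ, hy⟩ ⟨i, hk⟩ ⟨i₁, hj⟩ hkj hgp
      have hP2 := auxP2 f x' j (fun i => ?_)
      · omega
      · rcases hfi : f i with x | k
        · refine Or.inl ⟨x, rfl, ?_⟩
          rintro rfl
          exact hfree ⟨i, hfi⟩
        · exact Or.inr (by rw [huniq i k hfi])
    · push_neg at hL
      obtain ⟨i, i', hii, hi0, hi0'⟩ := aux_two_ne (by omega) i₀
      obtain ⟨k, hk⟩ : ∃ k, f i = inr k := by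
        rcases hfi : f i with x | k
        · exact absurd hfi (hL i x)
        · exact ⟨k, rfl⟩
      obtain ⟨k', hk'⟩ : ∃ k', f i' = inr k' := by
        rcases hfi : f i' with x | k'
        · exact absurd hfi (hL i' x)
        · exact ⟨k', rfl⟩
      have hkk : k ≠ k' := fun e => hii (f.injective (by rw [hk, hk', e]))
      exact auxJ_gpneg ha0 (S := Set.range ⇑g) ⟨i₀, hgi⟩ ⟨i, by rw [hoth i hi0]; exact hk⟩
        ⟨i', by rw [hoth i' hi0']; exact hk'⟩ hkk hgp'
  · -- the robot moves to an independent vertex `inr j'`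
    rw [hgi] at hfree
    obtain ⟨x, hx⟩ : ∃ x, f i₀ = inl x := by
      rcases hfi : f i₀ with x | k
      · exact ⟨x, rfl⟩
      · rw [hfi, hgi] at hadj
        exact absurd hadj auxJ_adj_rr
    obtain ⟨i₁, j, hj⟩ := hsome_inr
    have hi₁0 : i₁ ≠ i₀ := by
      rintro rfl
      rw [hx] at hj
      simp at hj
    have hjj' : j ≠ j' := by
      rintro rfl
      exact hfree ⟨i₁, hj⟩
    obtain ⟨i₂, hi₂0, y, hy⟩ : ∃ i₂, i₂ ≠ i₀ ∧ ∃ y, f i₂ = inl y := by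
      by_contra hno
      push_neg at hno
      have hall : ∀ i, i ≠ i₀ → f i = inr j := by
        intro i hi
        rcases hfi : f i with z | k
        · exact absurd hfi (hno i hi z)
        · rcases eq_or_ne k j with rfl | hkj
          · rfl
          · exact absurd hgp (auxJ_gpneg ha0 (S := Set.range ⇑f) ⟨i₀, hx⟩ ⟨i, hfi⟩ ⟨i₁, hj⟩ hkj)
      obtain ⟨i, i', hii, hi0, hi0'⟩ := aux_two_ne (by omega) i₀
      exact hii (f.injective (by rw [hall i hi0, hall i' hi0']))
    exact auxJ_gpneg ha0 (S := Set.range ⇑g) ⟨i₂, by rw [hoth i₂ hi₂0]; exact hy⟩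
      ⟨i₁, by rw [hoth i₁ hi₁0]; exact hj⟩ ⟨i₀, hgi⟩ hjj' hgp'

end AuxSplit2
section AuxSplit3

open Sum Function SimpleGraph

variable {V : Type*} [Fintype V] [DecidableEq V] {G : SimpleGraph V} {P : Set V → Prop} {t : ℕ}

lemma RCov.there_and_back (f : Fin t ↪ V) (i0 : Fin t) (x : V)
    (hx : x ∉ Set.range ⇑f) (hadj : G.Adj (f i0) x)
    (hP1 : P (Set.range ⇑(updEmb f i0 x hx))) (hP0 : P (Set.range ⇑f)) :
    RCov G P f f ({x} : Set V) := by
  have hback : f i0 ∉ Set.range ⇑(updEmb f i0 x hx) := by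
    rintro ⟨i, hi⟩
    rcases eq_or_ne i0 i with rfl | hne
    · rw [updEmb_same] at hi
      exact hx ⟨i0, hi.symm⟩
    · rw [updEmb_noteq hne.symm] at hi
      exact hne (f.injective hi).symm
  have hg2 : updEmb (updEmb f i0 x hx) i0 (f i0) hback = f := by
    apply Function.Embedding.ext
    intro i
    rcases eq_or_ne i0 i with rfl | hne
    · rw [updEmb_same]
    · rw [updEmb_noteq hne.symm, updEmb_noteq hne.symm]
  have step1 : LegalMove G P f (updEmb f i0 x hx) := legal_updEmb hadj hP1
  have step2 : LegalMove G P (updEmb f i0 x hx)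
      (updEmb (updEmb f i0 x hx) i0 (f i0) hback) :=
    legal_updEmb (by rw [updEmb_same]; exact hadj.symm) (by rw [hg2]; exact hP0)
  have h := (RCov.step step1).trans (RCov.step step2)
  rw [hg2] at h
  refine h.mono ?_
  rintro z rfl
  exact Or.inr ⟨i0, updEmb_same⟩

variable {a m : ℕ}

/-- The base configuration for the general position robots: the whole clique. -/
def auxB (a m : ℕ) : Fin a ↪ Fin a ⊕ Fin m :=
  ⟨fun i => inl i, fun i j h => by simpa using h⟩

@[simp] lemma auxB_apply (i : Fin a) : auxB a m i = inl i := rfl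

lemma auxJ_mobGP_ge (ha : 2 ≤ a) :
    ∃ f : Fin a ↪ Fin a ⊕ Fin m, IsMobileConfig (auxJ a m) (IsGenPosSet (auxJ a m)) f := by
  have ha0 : 0 < a := by omega
  have hgp_base : IsGenPosSet (auxJ a m) (Set.range ⇑(auxB a m)) := by
    refine auxJ_gpchar ha0 ?_
    rintro j j' ⟨i, hi⟩ _
    simp at hi
  have htour : ∀ j : Fin m,
      RCov (auxJ a m) (IsGenPosSet (auxJ a m)) (auxB a m) (auxB a m) {inr j} := by
    intro j
    have hfree : (inr j : Fin a ⊕ Fin m) ∉ Set.range ⇑(auxB a m) := by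
      rintro ⟨i, hi⟩
      simp at hi
    refine RCov.there_and_back (auxB a m) ⟨0, ha0⟩ (inr j) hfree auxJ_adj_lr ?_ hgp_base
    refine auxJ_gpchar ha0 ?_
    have hv : ∀ (i : Fin a) (k : Fin m),
        updEmb (auxB a m) ⟨0, ha0⟩ (inr j) hfree i = inr k → k = j := by
      intro i k h
      rcases eq_or_ne i ⟨0, ha0⟩ with rfl | hne
      · rw [updEmb_same] at h
        exact (Sum.inr.inj h).symm
      · rw [updEmb_noteq hne] at h
        simp at h
    rintro k k' ⟨i, hi⟩ ⟨i', hi'⟩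
    rw [hv i k hi, hv i' k' hi']
  have hfold := RCov.fold Finset.univ (fun j : Fin m => ({inr j} : Set (Fin a ⊕ Fin m)))
    (fun j _ => htour j)
  have hRC : RCov (auxJ a m) (IsGenPosSet (auxJ a m)) (auxB a m) (auxB a m) Set.univ := by
    refine hfold.mono ?_
    rintro (x | j) _
    · exact Or.inl ⟨x, rfl⟩
    · refine Or.inr ?_
      simp only [Set.mem_iUnion]
      exact ⟨j, Finset.mem_univ j, rfl⟩
  exact ⟨auxB a m, aux_mobile_of_RCov hgp_base hRC⟩

lemma auxJ_mobGP_le (ha : 2 ≤ a) (hm : 2 ≤ m) {t : ℕ}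
    (h : ∃ f : Fin t ↪ Fin a ⊕ Fin m, IsMobileConfig (auxJ a m) (IsGenPosSet (auxJ a m)) f) :
    t ≤ a := by
  by_contra hta
  push_neg at hta
  obtain ⟨f, hgp, N, c, h0, hleg, hcov⟩ := h
  rcases Nat.eq_zero_or_pos N with rfl | hN
  · have hsurj : ∀ v, v ∈ Set.range ⇑f := by
      intro v
      obtain ⟨k, hk, i, hi⟩ := hcov v
      have hk0 : k = 0 := by omega
      subst hk0
      rw [h0] at hi
      exact ⟨i, hi⟩
    have hne : (⟨0, by omega⟩ : Fin m) ≠ ⟨1, by omega⟩ := by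
      intro e
      have := Fin.mk.inj_iff.mp e
      omega
    exact auxJ_gpneg (show 0 < a by omega) (S := Set.range ⇑f)
      (hsurj (inl ⟨0, by omega⟩)) (hsurj (inr ⟨0, by omega⟩)) (hsurj (inr ⟨1, by omega⟩))
      hne hgp
  · have hlm := hleg 0 hN
    rw [h0] at hlm
    exact auxJ_frozen ha (by omega) f hgp _ hlm

/-- The base configuration for the mutual visibility robots: all the independent
vertices together with all clique vertices but the last. -/
def auxF (a m : ℕ) : Fin (a - 1 + m) ↪ Fin a ⊕ Fin m :=
  ⟨fun i => if h : (i : ℕ) < a - 1 then inl ⟨i, by omega⟩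
    else inr ⟨(i : ℕ) - (a - 1), by have := i.isLt; omega⟩, by
    intro i i' h
    dsimp only at h
    by_cases h1 : (i : ℕ) < a - 1 <;> by_cases h2 : (i' : ℕ) < a - 1
    · rw [dif_pos h1, dif_pos h2, Sum.inl.injEq, Fin.mk.injEq] at h
      exact Fin.ext h
    · rw [dif_pos h1, dif_neg h2] at h
      simp at h
    · rw [dif_neg h1, dif_pos h2] at h
      simp at h
    · rw [dif_neg h1, dif_neg h2, Sum.inr.injEq, Fin.mk.injEq] at h
      have hi := i.isLt
      have hi' := i'.isLt
      exact Fin.ext (by omega)⟩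

lemma auxF_lt {i : Fin (a - 1 + m)} (h : (i : ℕ) < a - 1) :
    auxF a m i = inl ⟨i, by omega⟩ := dif_pos h

lemma auxF_ge {i : Fin (a - 1 + m)} (h : ¬ (i : ℕ) < a - 1) :
    auxF a m i = inr ⟨(i : ℕ) - (a - 1), by have := i.isLt; omega⟩ := dif_neg h

lemma auxJ_mobMV_ge (ha : 2 ≤ a) (hm : 2 ≤ m) :
    ∃ f : Fin (a - 1 + m) ↪ Fin a ⊕ Fin m,
      IsMobileConfig (auxJ a m) (IsMutVisSet (auxJ a m)) f := by
  have ha0 : 0 < a := by omega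
  have h0lt : 0 < a - 1 + m := by omega
  have hlast : (inl ⟨a - 1, by omega⟩ : Fin a ⊕ Fin m) ∉ Set.range ⇑(auxF a m) := by
    rintro ⟨i, hi⟩
    by_cases h1 : (i : ℕ) < a - 1
    · rw [auxF_lt h1, Sum.inl.injEq, Fin.mk.injEq] at hi
      omega
    · rw [auxF_ge h1] at hi
      simp at hi
  have hcovf : ∀ v : Fin a ⊕ Fin m, v ≠ inl ⟨a - 1, by omega⟩ →
      v ∈ Set.range ⇑(auxF a m) := by
    rintro (x | j) hv
    · have hx1 : (x : ℕ) < a - 1 := by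
        have hxa := x.isLt
        rcases lt_or_ge (x : ℕ) (a - 1) with h | h
        · exact h
        · exact absurd (Fin.ext (show (x : ℕ) = a - 1 by omega) :
            x = (⟨a - 1, by omega⟩ : Fin a)) (fun e => hv (by rw [e]))
      exact ⟨⟨x, by omega⟩, by rw [auxF_lt hx1]⟩
    · refine ⟨⟨a - 1 + (j : ℕ), by have := j.isLt; omega⟩, ?_⟩
      rw [auxF_ge (by simp)]
      exact congrArg inr (Fin.ext (by simp))
  have hf_i₀ : auxF a m ⟨0, h0lt⟩ = inl ⟨0, ha0⟩ := by
    rw [auxF_lt (by simp; omega)]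
  set g := updEmb (auxF a m) ⟨0, h0lt⟩ (inl ⟨a - 1, by omega⟩) hlast with hg
  have h0g : (inl ⟨0, ha0⟩ : Fin a ⊕ Fin m) ∉ Set.range ⇑g := by
    rintro ⟨i, hi⟩
    rcases eq_or_ne i ⟨0, h0lt⟩ with rfl | hne
    · rw [hg, updEmb_same, Sum.inl.injEq, Fin.mk.injEq] at hi
      omega
    · rw [hg, updEmb_noteq hne] at hi
      by_cases h1 : (i : ℕ) < a - 1
      · rw [auxF_lt h1, Sum.inl.injEq, Fin.mk.injEq] at hi
        exact hne (Fin.ext hi)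
      · rw [auxF_ge h1] at hi
        simp at hi
  have hmv_f : IsMutVisSet (auxJ a m) (Set.range ⇑(auxF a m)) := auxJ_mvchar ha0 hlast
  have hmv_g : IsMutVisSet (auxJ a m) (Set.range ⇑g) := auxJ_mvchar ha0 h0g
  have hadj : (auxJ a m).Adj (auxF a m ⟨0, h0lt⟩) (inl ⟨a - 1, by omega⟩) := by
    rw [hf_i₀]
    refine auxJ_adj_ll.mpr ?_
    intro e
    have := Fin.mk.inj_iff.mp e
    omega
  have hlegal : LegalMove (auxJ a m) (IsMutVisSet (auxJ a m)) (auxF a m) g :=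
    legal_updEmb hadj hmv_g
  have h1 := (RCov.step hlegal).trans (RCov.refl g)
  have hRC : RCov (auxJ a m) (IsMutVisSet (auxJ a m)) (auxF a m) g Set.univ := by
    refine h1.mono ?_
    intro v _
    rcases eq_or_ne v (inl ⟨a - 1, by omega⟩) with rfl | hne
    · exact Or.inr ⟨⟨0, h0lt⟩, by rw [hg, updEmb_same]⟩
    · exact Or.inl (hcovf v hne)
  exact ⟨auxF a m, aux_mobile_of_RCov hmv_f hRC⟩

lemma auxJ_mobMV_le (ha : 2 ≤ a) (hm : 2 ≤ m) {t : ℕ}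
    (h : ∃ f : Fin t ↪ Fin a ⊕ Fin m, IsMobileConfig (auxJ a m) (IsMutVisSet (auxJ a m)) f) :
    t ≤ a - 1 + m := by
  obtain ⟨f, hmv, _⟩ := h
  have hcard : t ≤ a + m := by simpa using Fintype.card_le_of_embedding f
  by_contra hlt
  push_neg at hlt
  have ht : t = a + m := by omega
  subst ht
  have hbij : Function.Bijective ⇑f :=
    (Fintype.bijective_iff_injective_and_card ⇑f).mpr ⟨f.injective, by simp⟩
  have hrange : Set.range ⇑f = Set.univ := hbij.2.range_eq
  rw [hrange] at hmv
  exact auxJ_mvneg (by omega) hm hmv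

end AuxSplit3
theorem stmt_0 (a b : ℕ) :
    (∃ (V : Type) (_ : Fintype V) (G : SimpleGraph V),
        G.Connected ∧ mobGP G = a ∧ mobMV G = b) ↔
      (a = 1 ∧ b = 1) ∨ (2 ≤ a ∧ a ≤ b) := by
  constructor
  · rintro ⟨V, instV, G, hconn, ha, hb⟩
    haveI := instV
    haveI : DecidableEq V := Classical.decEq V
    have hV : Nonempty V := hconn.nonempty
    obtain ⟨v₀⟩ := hV
    have bddGP : BddAbove {t : ℕ | ∃ f : Fin t ↪ V, IsMobileConfig G (IsGenPosSet G) f} :=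
      ⟨Fintype.card V, fun tt htt => aux_mem_le_card htt⟩
    have bddMV : BddAbove {t : ℕ | ∃ f : Fin t ↪ V, IsMobileConfig G (IsMutVisSet G) f} :=
      ⟨Fintype.card V, fun tt htt => aux_mem_le_card htt⟩
    have e1 : Fin 1 ↪ V := ⟨fun _ => v₀, fun i j _ => Subsingleton.elim i j⟩
    have h1GP : 1 ∈ {t : ℕ | ∃ f : Fin t ↪ V, IsMobileConfig G (IsGenPosSet G) f} :=
      ⟨e1, aux_mobile hconn (fun h => aux_hP1 h) one_pos e1⟩
    have hinc : {t : ℕ | ∃ f : Fin t ↪ V, IsMobileConfig G (IsGenPosSet G) f} ⊆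
        {t : ℕ | ∃ f : Fin t ↪ V, IsMobileConfig G (IsMutVisSet G) f} :=
      fun tt ⟨f, hf⟩ => ⟨f, aux_mobile_gp_mv hconn hf⟩
    have ha1 : 1 ≤ a := by
      rw [← ha]
      exact le_csSup bddGP h1GP
    have hab : a ≤ b := by
      rw [← ha, ← hb]
      exact csSup_le_csSup bddMV ⟨1, h1GP⟩ hinc
    by_cases h2 : 2 ≤ a
    · exact Or.inr ⟨h2, hab⟩
    · refine Or.inl ⟨by omega, ?_⟩
      by_contra hb1
      have hb2 : 2 ≤ b := by omega
      have hbmem : b ∈ {t : ℕ | ∃ f : Fin t ↪ V, IsMobileConfig G (IsMutVisSet G) f} := by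
        rw [← hb]
        exact Nat.sSup_mem ⟨1, hinc h1GP⟩ bddMV
      obtain ⟨f, -⟩ := hbmem
      have e2 : Fin 2 ↪ V := (Fin.castLEEmb hb2).trans f
      have h2GP : 2 ∈ {t : ℕ | ∃ f : Fin t ↪ V, IsMobileConfig G (IsGenPosSet G) f} :=
        ⟨e2, aux_mobile hconn (fun h => aux_hP2 h) two_pos e2⟩
      have : 2 ≤ a := by
        rw [← ha]
        exact le_csSup bddGP h2GP
      omega
  · rintro (⟨rfl, rfl⟩ | ⟨ha2, hab⟩)
    · refine ⟨Fin 1, inferInstance, ⊤, aux_top_connected 1 one_pos, ?_, ?_⟩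
      · exact (aux_top_vals 1 one_pos).1
      · exact (aux_top_vals 1 one_pos).2
    · rcases eq_or_lt_of_le hab with rfl | hlt
      · refine ⟨Fin a, inferInstance, ⊤, aux_top_connected a (by omega), ?_, ?_⟩
        · exact (aux_top_vals a (by omega)).1
        · exact (aux_top_vals a (by omega)).2
      · set m := b - a + 1 with hm_def
        have hm : 2 ≤ m := by omega
        refine ⟨Fin a ⊕ Fin m, inferInstance, auxJ a m, auxJ_connected (by omega), ?_, ?_⟩
        · exact aux_sSup_eq (auxJ_mobGP_ge ha2) (fun x hx => auxJ_mobGP_le ha2 hm hx)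
        · have hb' : a - 1 + m = b := by omega
          rw [← hb']
          exact aux_sSup_eq (auxJ_mobMV_ge ha2 hm) (fun x hx => auxJ_mobMV_le ha2 hm hx)
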